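/- In a coherent quantale A, for any a ∈ A and any compact element c, c ≤ ρ(a) if and only if cᵏ ≤ a for some natural number k ≥ 1, where ρ(a) = ⋀{p ∈ Spec(A) | a ≤ p} is the radical of a. -/
import Mathlib


open CompleteLattice

/-- A commutative unital quantale: a complete lattice with a commutative monoid
multiplication distributing over arbitrary joins, whose unit is the top element. -/
class CommQuantale (A : Type*) extends CompleteLattice A, CommMonoid A where
  one_eq_top : (1 : A) = ⊤
  mul_sSup : ∀ (a : A) (S : Set A), a * sSup S = ⨆ b ∈ S, a * b

namespace CommQuantale

variable {A : Type*} [CommQuantale A]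

/-- A coherent quantale: algebraic, with `1 = ⊤` compact and compacts closed under `*`. -/
def Coherent (A : Type*) [CommQuantale A] : Prop :=
  (∀ a : A, a = sSup {c : A | IsCompactElement c ∧ c ≤ a}) ∧
  IsCompactElement (⊤ : A) ∧
  ∀ c d : A, IsCompactElement c → IsCompactElement d → IsCompactElement (c * d)

/-- m-prime element. -/
def MPrime (p : A) : Prop :=
  p < ⊤ ∧ ∀ a b : A, a * b ≤ p → a ≤ p ∨ b ≤ p

/-- The radical of an element. -/
def rad (a : A) : A := sInf {p : A | MPrime p ∧ a ≤ p}

/-- Maximal element of `A \ {1}`. -/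
def MaxElem (m : A) : Prop := m < ⊤ ∧ ∀ x : A, m ≤ x → x < ⊤ → x = m

/-- Radical element. -/
def RadElem (a : A) : Prop := rad a = a

/-- Residuation `a → b`. -/
def res (a b : A) : A := sSup {x : A | a * x ≤ b}

/-- Complemented element (member of the Boolean center `B(A)`). -/
def Complemented (e : A) : Prop := ∃ f : A, e ⊔ f = ⊤ ∧ e ⊓ f = ⊥

end CommQuantale

open CommQuantale

open CommQuantale

namespace QAux
variable {A : Type*} [CommQuantale A]

lemma qmul_sup (a b c : A) : a * (b ⊔ c) = a * b ⊔ a * c := by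
  have h := CommQuantale.mul_sSup a {b, c}
  rw [sSup_pair] at h
  rw [h, iSup_pair]

lemma qmul_mono_right {b c : A} (h : b ≤ c) (a : A) : a * b ≤ a * c := by
  have : a * c = a * b ⊔ a * c := by rw [← qmul_sup, sup_eq_right.mpr h]
  rw [this]; exact le_sup_left

lemma qmul_le_left (a b : A) : a * b ≤ a := by
  have : a * b ≤ a * 1 := qmul_mono_right (by rw [CommQuantale.one_eq_top]; exact le_top) a
  simpa using this

lemma qmul_le_right (a b : A) : a * b ≤ b := by
  rw [mul_comm]; exact qmul_le_left b a

lemma pow_compact (hA : Coherent A) {c : A} (hc : IsCompactElement c) :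
    ∀ k : ℕ, 1 ≤ k → IsCompactElement (c ^ k) := by
  intro k hk
  induction k with
  | zero => omega
  | succ n ih =>
    rcases Nat.eq_or_lt_of_le hk with h | h
    · simpa [← h] using hc
    · have hn : 1 ≤ n := by omega
      rw [pow_succ]
      exact hA.2.2 _ _ (ih hn) hc

end QAux

theorem stmt6 {A : Type*} [CommQuantale A] (hA : Coherent A)
    (a c : A) (hc : IsCompactElement c) :
    c ≤ rad a ↔ ∃ k : ℕ, 1 ≤ k ∧ c ^ k ≤ a := by
  constructor
  · -- hard direction, by contraposition
    intro hle
    by_contra hno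
    push_neg at hno
    -- Zorn on S = {x | a ≤ x ∧ ∀ k ≥ 1, ¬ c^k ≤ x}
    set S : Set A := {x | a ≤ x ∧ ∀ k : ℕ, 1 ≤ k → ¬ c ^ k ≤ x} with hS
    have haS : a ∈ S := ⟨le_rfl, fun k hk h => hno k hk h⟩
    have hchainS : ∀ t ⊆ S, IsChain (· ≤ ·) t → ∀ y ∈ t, ∃ ub ∈ S, ∀ z ∈ t, z ≤ ub := by
      intro t ht hchain y hy
      refine ⟨sSup t, ⟨le_trans (ht hy).1 (le_sSup hy), ?_⟩, fun z hz => le_sSup hz⟩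
      intro k hk hle'
      have hcomp := QAux.pow_compact hA hc k hk
      rw [CompleteLattice.isCompactElement_iff_le_of_directed_sSup_le] at hcomp
      obtain ⟨x, hxt, hx⟩ := hcomp t ⟨y, hy⟩ hchain.directedOn hle'
      exact (ht hxt).2 k hk hx
    obtain ⟨p, -, hpS, hpmax⟩ := zorn_le_nonempty₀ S hchainS a haS
    -- p is m-prime
    have hplt : p < ⊤ := by
      rcases lt_or_eq_of_le (le_top : p ≤ ⊤) with h | h
      · exact h
      · exact absurd (hpS.2 1 le_rfl) (by simp [h])
    have hprime : MPrime p := by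
      refine ⟨hplt, fun x y hxy => ?_⟩
      by_contra hcon
      push_neg at hcon
      obtain ⟨hx, hy⟩ := hcon
      -- p ⊔ x and p ⊔ y are strictly above p, so leave S
      have key : ∀ z : A, ¬ z ≤ p → ∃ m : ℕ, 1 ≤ m ∧ c ^ m ≤ p ⊔ z := by
        intro z hz
        by_contra hnone
        push_neg at hnone
        have hmem : p ⊔ z ∈ S := ⟨le_trans hpS.1 le_sup_left, hnone⟩
        have := hpmax hmem le_sup_left
        exact hz (le_trans le_sup_right this)
      obtain ⟨m, hm, hcm⟩ := key x hx
      obtain ⟨n, hn, hcn⟩ := key y hy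
      have hmul : (p ⊔ x) * (p ⊔ y) ≤ p := by
        rw [QAux.qmul_sup]
        apply sup_le (QAux.qmul_le_right _ _)
        rw [mul_comm, QAux.qmul_sup]
        exact sup_le (QAux.qmul_le_right _ _) (by rw [mul_comm]; exact hxy)
      have : c ^ (m + n) ≤ p := by
        rw [pow_add]
        calc c ^ m * c ^ n ≤ (p ⊔ x) * c ^ n := by
              rw [mul_comm, mul_comm (p ⊔ x)]; exact QAux.qmul_mono_right hcm _
          _ ≤ (p ⊔ x) * (p ⊔ y) := QAux.qmul_mono_right hcn _
          _ ≤ p := hmul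
      exact hpS.2 (m + n) (by omega) this
    -- c ≤ rad a ≤ p contradicts c^1 ≰ p
    have : c ≤ p := le_trans hle (sInf_le ⟨hprime, hpS.1⟩)
    exact hpS.2 1 le_rfl (by simpa using this)
  · rintro ⟨k, hk, hka⟩
    apply _root_.le_sInf
    rintro p ⟨hp, hap⟩
    have : ∀ m : ℕ, 1 ≤ m → c ^ m ≤ p → c ≤ p := by
      intro m hm
      induction m with
      | zero => omega
      | succ n ih =>
        intro h
        rcases Nat.eq_or_lt_of_le hm with h1 | h1
        · simpa [← h1] using h
        · rw [pow_succ] at h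
          rcases hp.2 _ _ h with h' | h'
          · exact ih (by omega) h'
          · exact h'
    exact this k hk (le_trans hka hap)
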